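/- Let M be a topological space, E a real topological vector space, and ψ : M → E a continuous map. Suppose that (i) the range of ψ is a convex set, (ii) every fiber ψ⁻¹({u}) is preconnected, and (iii) the corestriction ψ : M → range ψ is an open map (where range ψ carries the subspace topology). Then ψ is convex, i.e., for all u, v in the range of ψ the preimage ψ⁻¹([u,v]) of the segment [u,v] is connected. -/

import Mathlib

/-- If `ψ : M → E` is continuous with convex range, preconnected fibers,
and open corestriction onto its range, then `ψ` is convex: the preimage of every
segment between points of the range is connected. -/
theorem stmt0 {M E : Type*} [TopologicalSpace M]
    [AddCommGroup E] [Module ℝ E] [TopologicalSpace E]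
    [IsTopologicalAddGroup E] [ContinuousSMul ℝ E]
    (ψ : M → E) (hcont : Continuous ψ)
    (hconv : Convex ℝ (Set.range ψ))
    (hfib : ∀ u : E, IsPreconnected (ψ ⁻¹' {u}))
    (hopen : IsOpenMap (Set.rangeFactorization ψ)) :
    ∀ u ∈ Set.range ψ, ∀ v ∈ Set.range ψ,
      IsConnected (ψ ⁻¹' segment ℝ u v) := by
  intro u hu v hv
  set S : Set E := segment ℝ u v with hS
  have hSsub : S ⊆ Set.range ψ := hconv.segment_subset hu hv
  set g : M → Set.range ψ := Set.rangeFactorization ψ with hg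
  have hgcont : Continuous g := Continuous.subtype_mk hcont _
  set S' : Set (Set.range ψ) := Subtype.val ⁻¹' S with hS'
  have hpre : g ⁻¹' S' = ψ ⁻¹' S := rfl
  set f := S'.restrictPreimage g with hf
  have hfo : IsOpenMap f := hopen.restrictPreimage S'
  have hfc : Continuous f := hgcont.restrictPreimage
  have hfs : Function.Surjective f := by
    rintro ⟨⟨w, hwr⟩, hwS⟩
    obtain ⟨x, hx⟩ := hwr
    refine ⟨⟨x, ?_⟩, ?_⟩
    · show ψ x ∈ S
      rw [hx]; exact hwS
    · ext
      simp [f, g, Set.rangeFactorization, hx]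
  have hq : Topology.IsQuotientMap f := hfo.isQuotientMap hfc hfs
  have hfibf : ∀ w, IsConnected (f ⁻¹' {w}) := by
    intro w
    have himg : Subtype.val '' (f ⁻¹' {w}) = ψ ⁻¹' {((w : Set.range ψ) : E)} := by
      ext x
      constructor
      · rintro ⟨⟨y, hy⟩, hy1, rfl⟩
        have h1 : f ⟨y, hy⟩ = w := hy1
        have h2 : (((f ⟨y, hy⟩ : S') : Set.range ψ) : E) = ((w : Set.range ψ) : E) := by
          rw [h1]
        simpa [f, g, Set.rangeFactorization] using h2
      · intro hx
        have hxS : x ∈ ψ ⁻¹' S := by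
          have : ((w : Set.range ψ) : E) ∈ S := w.2
          simp only [Set.mem_preimage, Set.mem_singleton_iff] at hx
          simp [Set.mem_preimage, hx, this]
        refine ⟨⟨x, hxS⟩, ?_, rfl⟩
        show f ⟨x, hxS⟩ = w
        ext
        simpa [f, g, Set.rangeFactorization] using hx
    have hne : (f ⁻¹' {w}).Nonempty := ⟨Classical.choose (hfs w), Classical.choose_spec (hfs w)⟩
    refine ⟨hne, ?_⟩
    have := hfib ((w : Set.range ψ) : E)
    rw [← himg] at this
    exact Topology.IsInducing.subtypeVal.isPreconnected_image.mp this
  -- S' is preconnected and nonempty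
  have hSconn : IsPreconnected S := (convex_segment u v).isPreconnected
  have hS'conn : IsPreconnected S' := by
    apply Topology.IsInducing.subtypeVal.isPreconnected_image.mp
    have : Subtype.val '' S' = S := by
      rw [Set.image_preimage_eq_inter_range, Subtype.range_val]
      exact Set.inter_eq_self_of_subset_left hSsub
    rwa [this]
  have hune : u ∈ S := left_mem_segment ℝ u v
  have hS'ne : S'.Nonempty := ⟨⟨u, hu⟩, hune⟩
  haveI : PreconnectedSpace S' := Subtype.preconnectedSpace hS'conn
  -- pick a point in the domain
  obtain ⟨x, hx⟩ := hu
  have hxS : x ∈ ψ ⁻¹' S := by simp [Set.mem_preimage, hx, hune]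
  have key : IsConnected (f ⁻¹' connectedComponent (f ⟨x, hxS⟩)) :=
    preimage_connectedComponent_connected hfibf hq.isCoinducing _
  have huniv : connectedComponent (f ⟨x, hxS⟩) = Set.univ :=
    PreconnectedSpace.connectedComponent_eq_univ _
  rw [huniv, Set.preimage_univ] at key
  rw [isConnected_iff_connectedSpace]
  exact connectedSpace_iff_univ.mpr key
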